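/- Let f : ℕ → ℝ and let B, K be positive integers. Suppose that for every integer a ≥ B and every integer n with K·a ≤ n ≤ K·(a+1), one has Δ^{n−a}(Δ−1)^{a} f(a) = 0. Then there exist polynomials P₁, P₂ with real coefficients such that f(a) = P₁(a) + P₂(a)·2^a for all integers a ≥ B. -/

import Mathlib

open Polynomial

/-- Forward difference operator on functions `ℕ → ℝ`: `Δ f a = f (a+1) - f a`. -/
noncomputable def fwdD (f : ℕ → ℝ) : ℕ → ℝ := fun a => f (a + 1) - f a

/-- The operator `Δ - 1` on functions `ℕ → ℝ`: `(Δ-1) f a = f (a+1) - 2 f a`. -/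
noncomputable def fwdDOne (f : ℕ → ℝ) : ℕ → ℝ := fun a => f (a + 1) - 2 * f a

/-- Surjectivity of `R ↦ R(X+1) - R` on `ℝ[X]`, degree-bounded version. -/
lemma exists_anti : ∀ n : ℕ, ∀ Q : ℝ[X], Q.natDegree ≤ n →
    ∃ R : ℝ[X], R.comp (X + 1) - R = Q := by
  intro n
  induction n with
  | zero =>
    intro Q hQ
    refine ⟨C (Q.coeff 0) * X, ?_⟩
    rw [Polynomial.eq_C_of_natDegree_le_zero hQ]
    simp [mul_comp]
    ring
  | succ n ih =>
    intro Q hQ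
    set c : ℝ := Q.coeff (n + 1) with hc
    set R0 : ℝ[X] := C (c / (n + 2)) * X ^ (n + 2) with hR0
    have hD : R0.comp (X + 1) - R0 = C (c / (n + 2)) * ((X + 1) ^ (n + 2) - X ^ (n + 2)) := by
      simp [hR0, mul_comp]
      ring
    have hcoeff : ∀ j : ℕ, (R0.comp (X + 1) - R0).coeff j
        = c / (n + 2) * (((n + 2).choose j : ℝ) - if j = n + 2 then 1 else 0) := by
      intro j
      rw [hD, coeff_C_mul, coeff_sub, coeff_X_add_one_pow, coeff_X_pow]
    have hdeg : (Q - (R0.comp (X + 1) - R0)).natDegree ≤ n := by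
      rw [natDegree_le_iff_coeff_eq_zero]
      intro N hN
      rw [coeff_sub, hcoeff]
      rcases eq_or_lt_of_le (Nat.succ_le_of_lt hN) with hN' | hN'
      · rw [← hN', if_neg (by omega), Nat.choose_succ_self_right, ← hc]
        have h2 : (n : ℝ) + 2 ≠ 0 := by positivity
        field_simp
        push_cast
        ring
      · have h1 : Q.coeff N = 0 := natDegree_le_iff_coeff_eq_zero.mp hQ N hN'
        rcases eq_or_lt_of_le (Nat.succ_le_of_lt hN') with hN'' | hN''
        · rw [h1, ← hN'', if_pos rfl, Nat.choose_self]
          simp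
        · have h2 : (n + 2).choose N = 0 := Nat.choose_eq_zero_of_lt (by omega)
          rw [h1, h2, if_neg (by omega)]
          simp
    obtain ⟨R1, hR1⟩ := ih _ hdeg
    exact ⟨R0 + R1, by rw [add_comp]; linear_combination hR1⟩

/-- Surjectivity of `q ↦ q(X+1) - 2q` on `ℝ[X]`, degree-bounded version. -/
lemma exists_anti2 : ∀ n : ℕ, ∀ Q : ℝ[X], Q.natDegree ≤ n →
    ∃ q : ℝ[X], q.comp (X + 1) - 2 * q = Q := by
  intro n
  induction n with
  | zero =>
    intro Q hQ
    refine ⟨-C (Q.coeff 0), ?_⟩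
    rw [Polynomial.eq_C_of_natDegree_le_zero hQ]
    simp
    ring
  | succ n ih =>
    intro Q hQ
    set c : ℝ := Q.coeff (n + 1) with hc
    set q0 : ℝ[X] := -(C c * X ^ (n + 1)) with hq0
    have hD : q0.comp (X + 1) - 2 * q0 = C c * X ^ (n + 1) - C c * ((X + 1) ^ (n + 1) - X ^ (n + 1)) := by
      simp [hq0, mul_comp]
      ring
    have hcoeff : ∀ j : ℕ, (q0.comp (X + 1) - 2 * q0).coeff j
        = c * (if j = n + 1 then 1 else 0) - c * (((n + 1).choose j : ℝ) - if j = n + 1 then 1 else 0) := by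
      intro j
      rw [hD, coeff_sub, coeff_C_mul, coeff_C_mul, coeff_sub, coeff_X_add_one_pow, coeff_X_pow]
    have hdeg : (Q - (q0.comp (X + 1) - 2 * q0)).natDegree ≤ n := by
      rw [natDegree_le_iff_coeff_eq_zero]
      intro N hN
      rw [coeff_sub, hcoeff]
      rcases eq_or_lt_of_le (Nat.succ_le_of_lt hN) with hN' | hN'
      · rw [← hN', if_pos rfl, Nat.choose_self, ← hc]
        push_cast
        ring
      · have h1 : Q.coeff N = 0 := natDegree_le_iff_coeff_eq_zero.mp hQ N hN'
        have h2 : (n + 1).choose N = 0 := Nat.choose_eq_zero_of_lt (by omega)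
        rw [h1, h2, if_neg (by omega)]
        simp
    obtain ⟨q1, hq1⟩ := ih _ hdeg
    exact ⟨q0 + q1, by rw [add_comp]; linear_combination hq1⟩

/-- shift: `Δ^[j] F (x+1) = Δ^[j+1] F x + Δ^[j] F x`. -/
lemma fwdD_shift (F : ℕ → ℝ) (j x : ℕ) :
    fwdD^[j] F (x + 1) = fwdD^[j + 1] F x + fwdD^[j] F x := by
  rw [Function.iterate_succ_apply']
  simp [fwdD]

/-- `Δ^[m] ((Δ-1) F) x = Δ^[m+1] F x - Δ^[m] F x`. -/
lemma fwdD_iterate_fwdDOne (F : ℕ → ℝ) : ∀ m x : ℕ,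
    fwdD^[m] (fwdDOne F) x = fwdD^[m + 1] F x - fwdD^[m] F x := by
  intro m
  induction m with
  | zero => intro x; simp [fwdDOne, fwdD]; ring
  | succ m ih =>
    intro x
    rw [Function.iterate_succ_apply' fwdD m (fwdDOne F)]
    show fwdD^[m] (fwdDOne F) (x+1) - fwdD^[m] (fwdDOne F) x = _
    rw [ih (x+1), ih x, fwdD_shift F (m+1) x, fwdD_shift F m x]
    ring

lemma c_rec (f : ℕ → ℝ) (m a : ℕ) :
    fwdD^[m] (fwdDOne^[a + 1] f) (a + 1)
      = fwdD^[m + 2] (fwdDOne^[a] f) a - fwdD^[m] (fwdDOne^[a] f) a := by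
  rw [Function.iterate_succ_apply' fwdDOne a f]
  rw [fwdD_iterate_fwdDOne (fwdDOne^[a] f) m (a + 1)]
  rw [fwdD_shift (fwdDOne^[a] f) (m + 1) a, fwdD_shift (fwdDOne^[a] f) m a]
  ring

lemma c_zero (f : ℕ → ℝ) (B k : ℕ)
    (h0 : ∀ a : ℕ, B ≤ a → ∀ m : ℕ, k * a ≤ m → m ≤ k * a + k + 1 →
      fwdD^[m] (fwdDOne^[a] f) a = 0) :
    ∀ t a m : ℕ, B ≤ a → k * a ≤ m → m ≤ k * a + k + 1 + t →
      fwdD^[m] (fwdDOne^[a] f) a = 0 := by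
  intro t
  induction t with
  | zero => intro a m ha h1 h2; exact h0 a ha m h1 h2
  | succ t ih =>
    intro a m ha h1 h2
    rcases le_or_gt m (k * a + k + 1 + t) with h3 | h3
    · exact ih a m ha h1 h3
    · obtain ⟨m', rfl⟩ : ∃ m', m = m' + 2 := ⟨m - 2, by omega⟩
      have hm : k * (a + 1) = k * a + k := by ring
      have e1 : fwdD^[m'] (fwdDOne^[a + 1] f) (a + 1) = 0 := by
        apply ih (a + 1) m' (le_trans ha (Nat.le_succ a)) <;> rw [hm] <;> omega
      have e2 : fwdD^[m'] (fwdDOne^[a] f) a = 0 := by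
        apply ih a m' ha <;> omega
      have := c_rec f m' a
      rw [e1, e2] at this
      linarith

/-- If all iterated differences of `H` vanish at `B`, then `H` vanishes on `[B, ∞)`. -/
lemma vanish_prop (H : ℕ → ℝ) (B : ℕ) (h0 : ∀ j, fwdD^[j] H B = 0) :
    ∀ x, B ≤ x → H x = 0 := by
  have key : ∀ x, B ≤ x → ∀ j, fwdD^[j] H x = 0 := by
    intro x hx
    induction x, hx using Nat.le_induction with
    | base => exact h0
    | succ x hx ih =>
      intro j
      have : fwdD^[j] H (x + 1) = fwdD^[j + 1] H x + fwdD^[j] H x := by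
        rw [Function.iterate_succ_apply']
        simp [fwdD]
      rw [this, ih, ih, add_zero]
  intro x hx
  exact key x hx 0

/-- A function killed by `Δ^M` on `[B,∞)` agrees with a polynomial there. -/
lemma poly_of_iter_zero : ∀ M : ℕ, ∀ g : ℕ → ℝ, ∀ B : ℕ,
    (∀ x, B ≤ x → fwdD^[M] g x = 0) → ∃ Q : ℝ[X], ∀ x, B ≤ x → g x = Q.eval (x : ℝ) := by
  intro M
  induction M with
  | zero =>
    intro g B hg
    exact ⟨0, fun x hx => by simpa using hg x hx⟩
  | succ M ih =>
    intro g B hg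
    obtain ⟨Q, hQ⟩ := ih (fwdD g) B (by
      intro x hx
      have := hg x hx
      rwa [Function.iterate_succ_apply] at this)
    obtain ⟨R, hR⟩ := exists_anti Q.natDegree Q le_rfl
    have hRev : ∀ y : ℝ, R.eval (y + 1) - R.eval y = Q.eval y := by
      intro y
      have := congrArg (Polynomial.eval y) hR
      simpa [eval_comp] using this
    have hconst : ∀ x, B ≤ x → g x - R.eval (x : ℝ) = g B - R.eval (B : ℝ) := by
      intro x hx
      induction x, hx using Nat.le_induction with
      | base => rfl
      | succ x hx ih2 =>
        have h1 : g (x + 1) - g x = Q.eval (x : ℝ) := hQ x hx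
        have h2 := hRev (x : ℝ)
        push_cast
        push_cast at ih2
        linarith
    refine ⟨R + C (g B - R.eval (B : ℝ)), fun x hx => ?_⟩
    rw [eval_add, eval_C]
    have := hconst x hx
    linarith

/-- One step: solving `(Δ-1) g = Q₁ + Q₂ 2^x` on `[B, ∞)`. -/
lemma solve_one (g : ℕ → ℝ) (B : ℕ) (Q₁ Q₂ : ℝ[X])
    (hg : ∀ x, B ≤ x → fwdDOne g x = Q₁.eval (x : ℝ) + Q₂.eval (x : ℝ) * 2 ^ x) :
    ∃ P₁ P₂ : ℝ[X], ∀ x, B ≤ x → g x = P₁.eval (x : ℝ) + P₂.eval (x : ℝ) * 2 ^ x := by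
  obtain ⟨q, hq⟩ := exists_anti2 Q₁.natDegree Q₁ le_rfl
  obtain ⟨r, hr⟩ := exists_anti (C (1/2 : ℝ) * Q₂).natDegree (C (1/2 : ℝ) * Q₂) le_rfl
  have hqe : ∀ y : ℝ, q.eval (y + 1) - 2 * q.eval y = Q₁.eval y := by
    intro y
    have := congrArg (Polynomial.eval y) hq
    simpa [eval_comp] using this
  have hre : ∀ y : ℝ, r.eval (y + 1) - r.eval y = Q₂.eval y / 2 := by
    intro y
    have := congrArg (Polynomial.eval y) hr
    simp [eval_comp] at this
    linarith
  set u : ℕ → ℝ := fun x => g x - (q.eval (x : ℝ) + r.eval (x : ℝ) * 2 ^ x) with hu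
  have hustep : ∀ x, B ≤ x → u (x + 1) = 2 * u x := by
    intro x hx
    have h1 : g (x + 1) - 2 * g x = Q₁.eval (x : ℝ) + Q₂.eval (x : ℝ) * 2 ^ x := hg x hx
    have h2 := hqe (x : ℝ)
    have h3 := hre (x : ℝ)
    simp only [hu]
    push_cast
    have h2x : (2 : ℝ) ^ (x + 1) = 2 * 2 ^ x := by ring
    rw [h2x]
    linear_combination h1 - h2 - 2 * (2:ℝ) ^ x * h3
  have hugen : ∀ x, B ≤ x → u x = (u B / 2 ^ B) * 2 ^ x := by
    intro x hx
    induction x, hx using Nat.le_induction with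
    | base =>
      field_simp
    | succ x hx ih =>
      rw [hustep x hx, ih]
      ring
  refine ⟨q, r + C (u B / 2 ^ B), fun x hx => ?_⟩
  have h4 := hugen x hx
  simp only [hu] at h4
  rw [eval_add, eval_C]
  linarith [h4]

/-- Iterated step. -/
lemma solve_iter : ∀ b : ℕ, ∀ g : ℕ → ℝ, ∀ B : ℕ, ∀ P₁ P₂ : ℝ[X],
    (∀ x, B ≤ x → fwdDOne^[b] g x = P₁.eval (x : ℝ) + P₂.eval (x : ℝ) * 2 ^ x) →
    ∃ P₁' P₂' : ℝ[X], ∀ x, B ≤ x → g x = P₁'.eval (x : ℝ) + P₂'.eval (x : ℝ) * 2 ^ x := by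
  intro b
  induction b with
  | zero => intro g B P₁ P₂ hg; exact ⟨P₁, P₂, by simpa using hg⟩
  | succ b ih =>
    intro g B P₁ P₂ hg
    obtain ⟨R₁, R₂, hR⟩ := ih (fwdDOne g) B P₁ P₂ (by
      intro x hx
      have := hg x hx
      rwa [Function.iterate_succ_apply] at this)
    exact solve_one g B R₁ R₂ hR

theorem stmt0 (f : ℕ → ℝ) (B K : ℕ) (hB : 1 ≤ B) (hK : 1 ≤ K)
    (h : ∀ a : ℕ, B ≤ a → ∀ n : ℕ, K * a ≤ n → n ≤ K * (a + 1) →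
      fwdD^[n - a] (fwdDOne^[a] f) a = 0) :
    ∃ P₁ P₂ : Polynomial ℝ, ∀ a : ℕ, B ≤ a →
      f a = P₁.eval (a : ℝ) + P₂.eval (a : ℝ) * 2 ^ a := by
  obtain ⟨k, rfl⟩ : ∃ k, K = k + 1 := ⟨K - 1, by omega⟩
  have h0 : ∀ a : ℕ, B ≤ a → ∀ m : ℕ, k * a ≤ m → m ≤ k * a + k + 1 →
      fwdD^[m] (fwdDOne^[a] f) a = 0 := by
    intro a ha m h1 h2
    have e1 : (k + 1) * a = k * a + a := by ring
    have e2 : (k + 1) * (a + 1) = k * a + k + 1 + a := by ring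
    have := h a ha (m + a) (by omega) (by omega)
    rwa [Nat.add_sub_cancel] at this
  have hzero := c_zero f B k h0
  have hB0 : ∀ m : ℕ, k * B ≤ m → fwdD^[m] (fwdDOne^[B] f) B = 0 := by
    intro m hm
    exact hzero m B m le_rfl hm (by omega)
  set G : ℕ → ℝ := fwdDOne^[B] f with hG
  have hj : ∀ j : ℕ, fwdD^[j] (fwdD^[k * B] G) B = 0 := by
    intro j
    rw [← Function.iterate_add_apply fwdD j (k * B) G]
    exact hB0 (j + k * B) (by omega)
  have hHvanish := vanish_prop (fwdD^[k * B] G) B hj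
  obtain ⟨Q, hQ⟩ := poly_of_iter_zero (k * B) G B hHvanish
  exact solve_iter B f B Q 0 (by
    intro x hx
    rw [← hG, hQ x hx]
    simp)
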